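/- Let h ∈ F_{q^m}[x] be irreducible of degree r. Identifying the quotient F_{q^m}[x]/(h) with the finite field F_{q^{mr}}, the image modulo h of the set K = {a^q - a : a ∈ F_{q^m}[x]_{<t}} (for any t ≥ r) equals the kernel of the trace map Tr_{F_{q^{mr}}/F_q}. -/

import Mathlib

open Polynomial

lemma artin_schreier_finite (F L : Type*) [Field F] [Fintype F] [Field L] [Finite L]
    [Algebra F L] (q : ℕ) (hq : Fintype.card F = q) (x : L) :
    Algebra.trace F L x = 0 ↔ ∃ y : L, x = y ^ q - y := by
  classical
  obtain ⟨p, hp⟩ := CharP.exists F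
  haveI : CharP F p := hp
  obtain ⟨n, hpp, hcard⟩ := FiniteField.card F p
  haveI : Fact p.Prime := ⟨hpp⟩
  haveI : CharP L p := charP_of_injective_algebraMap (algebraMap F L).injective p
  have hq' : q = p ^ (n : ℕ) := hq ▸ hcard
  have hq1 : 1 < q := hq ▸ Fintype.one_lt_card
  have hbij : Function.Bijective (iterateFrobenius L p n) :=
    Finite.injective_iff_bijective.mp (iterateFrobenius L p n).injective
  let e : L ≃+* L := RingEquiv.ofBijective _ hbij
  have he : ∀ y : L, e y = y ^ q := fun y => by
    show iterateFrobenius L p n y = y ^ q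
    rw [iterateFrobenius_def, hq']
  let eA : L ≃ₐ[F] L :=
    { e with
      commutes' := fun c => by
        show e _ = _
        rw [he, ← map_pow, ← hq, FiniteField.pow_card] }
  have htr : ∀ y : L, Algebra.trace F L (y ^ q) = Algebra.trace F L y := fun y => by
    have h1 := Algebra.trace_eq_of_algEquiv eA y
    rwa [show eA y = y ^ q from he y] at h1
  constructor
  · intro hx
    let φ : L →+ L := AddMonoidHom.mk' (fun y => y ^ q - y) (fun a b => by
      have hadd : (a + b) ^ q = a ^ q + b ^ q := by rw [← he, ← he, ← he, map_add]
      show (a + b) ^ q - (a + b) = (a ^ q - a) + (b ^ q - b)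
      rw [hadd]; ring)
    let ψ : L →+ F := (Algebra.trace F L).toAddMonoidHom
    have hsub : φ.range ≤ ψ.ker := by
      rintro _ ⟨y, rfl⟩
      show Algebra.trace F L (y ^ q - y) = 0
      rw [map_sub, htr, sub_self]
    -- card of ker φ is q
    have hkerphi : Nat.card φ.ker = q := by
      have hle : Nat.card φ.ker ≤ q := by
        set P : L[X] := X ^ q - X with hP
        have hPne : P ≠ 0 := FiniteField.X_pow_card_sub_X_ne_zero L hq1
        have hsub2 : (φ.ker : Set L) ⊆ (P.roots.toFinset : Set L) := by
          intro y hy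
          have hy' : y ^ q - y = 0 := hy
          simp only [Finset.coe_sort_coe, Multiset.mem_toFinset, Finset.mem_coe]
          rw [mem_roots hPne]
          show P.eval y = 0
          simp [hP, hy']
        calc Nat.card φ.ker = (φ.ker : Set L).ncard := Nat.card_coe_set_eq _
          _ ≤ ((P.roots.toFinset : Set L)).ncard :=
              Set.ncard_le_ncard hsub2 (Set.toFinite _)
          _ = P.roots.toFinset.card := by rw [Set.ncard_coe_finset]
          _ ≤ Multiset.card P.roots := P.roots.toFinset_card_le
          _ ≤ P.natDegree := P.card_roots'
          _ = q := by
              have hlt : (X : L[X]).natDegree < (X ^ q : L[X]).natDegree := by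
                simpa [natDegree_X_pow, natDegree_X] using hq1
              rw [hP, natDegree_sub_eq_left_of_natDegree_lt hlt, natDegree_X_pow]
      have hge : q ≤ Nat.card φ.ker := by
        have hmem : ∀ c : F, algebraMap F L c ∈ φ.ker := by
          intro c
          show algebraMap F L c ^ q - algebraMap F L c = 0
          rw [← map_pow, ← hq, FiniteField.pow_card, sub_self]
        have hinj : Function.Injective (fun c : F => (⟨algebraMap F L c, hmem c⟩ : φ.ker)) := by
          intro a b hab
          exact (algebraMap F L).injective (congrArg Subtype.val hab)
        calc q = Nat.card F := by rw [Nat.card_eq_fintype_card, hq]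
          _ ≤ Nat.card φ.ker := Nat.card_le_card_of_injective _ hinj
      omega
    -- trace is surjective
    haveI : FiniteDimensional F L := Module.Finite.of_finite
    haveI : Algebra.IsAlgebraic F L := Algebra.IsAlgebraic.of_finite F L
    have hexa : ∃ a : L, Algebra.trace F L a ≠ 0 := by
      by_contra hcon
      push_neg at hcon
      exact Algebra.trace_ne_zero F L (LinearMap.ext fun a => by simpa using hcon a)
    obtain ⟨a, ha⟩ := hexa
    have hsurj : Function.Surjective ψ := by
      intro d
      refine ⟨(d / Algebra.trace F L a) • a, ?_⟩
      show Algebra.trace F L _ = d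
      rw [map_smul, smul_eq_mul, div_mul_cancel₀ _ ha]
    have hkerpsi : Nat.card ψ.ker = Nat.card φ.range := by
      have h1 : Nat.card L = Nat.card (L ⧸ φ.ker) * Nat.card φ.ker :=
        AddSubgroup.card_eq_card_quotient_mul_card_addSubgroup φ.ker
      have h2 : Nat.card (L ⧸ φ.ker) = Nat.card φ.range :=
        Nat.card_congr (QuotientAddGroup.quotientKerEquivRange φ).toEquiv
      have h3 : Nat.card L = Nat.card (L ⧸ ψ.ker) * Nat.card ψ.ker :=
        AddSubgroup.card_eq_card_quotient_mul_card_addSubgroup ψ.ker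
      have h4 : Nat.card (L ⧸ ψ.ker) = Nat.card ψ.range :=
        Nat.card_congr (QuotientAddGroup.quotientKerEquivRange ψ).toEquiv
      have h5 : ψ.range = ⊤ := AddMonoidHom.range_eq_top_of_surjective ψ hsurj
      have h6 : Nat.card ψ.range = q := by
        rw [h5]
        calc Nat.card (⊤ : AddSubgroup F) = Nat.card F := Nat.card_congr AddSubgroup.topEquiv.toEquiv
          _ = q := by rw [Nat.card_eq_fintype_card, hq]
      have hq0 : 0 < q := by omega
      have := h1.symm.trans h3
      rw [h2, h4, h6, hkerphi] at this
      -- this : Nat.card φ.range * q = q * Nat.card ψ.ker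
      rw [mul_comm] at this
      exact (Nat.eq_of_mul_eq_mul_left hq0 this).symm
    have hk : φ.range = ψ.ker :=
      AddSubgroup.eq_of_le_of_card_ge hsub (le_of_eq hkerpsi)
    have hxk : x ∈ ψ.ker := hx
    rw [← hk] at hxk
    obtain ⟨y, hy⟩ := hxk
    exact ⟨y, hy.symm⟩
  · rintro ⟨y, rfl⟩
    rw [map_sub, htr, sub_self]

/-- For `h` irreducible of degree `r ≤ t`, the image modulo `h` of
`K = {a^q - a : a ∈ F_{q^m}[x]_{<t}}` is the kernel of the trace map of the
field `F_{q^m}[x]/(h) ≅ F_{q^{mr}}` down to `F_q`. -/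
theorem stmt3 (F E : Type*) [Field F] [Fintype F] [Field E] [Fintype E]
    [Algebra F E] (q m : ℕ) (hq : Fintype.card F = q)
    (hE : Fintype.card E = q ^ m) (hm : 2 ≤ m)
    (h : E[X]) (hirr : Irreducible h) (r t : ℕ) (hr : h.natDegree = r)
    (hrt : r ≤ t) :
    (Ideal.Quotient.mk (Ideal.span {h})) ''
        {p : E[X] | ∃ a ∈ Polynomial.degreeLT E t, p = a ^ q - a}
      = {x : E[X] ⧸ Ideal.span {h} |
          Algebra.trace F (E[X] ⧸ Ideal.span {h}) x = 0} := by
  classical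
  haveI hmax : (Ideal.span {h}).IsMaximal := PrincipalIdealRing.isMaximal_of_irreducible hirr
  letI : Field (E[X] ⧸ Ideal.span {h}) := Ideal.Quotient.field _
  haveI : Module.Finite E (E[X] ⧸ Ideal.span {h}) := (AdjoinRoot.powerBasis hirr.ne_zero).finite
  haveI : Finite (E[X] ⧸ Ideal.span {h}) := Module.finite_of_finite E
  ext z
  simp only [Set.mem_image, Set.mem_setOf_eq]
  constructor
  · rintro ⟨p', ⟨a, ha, rfl⟩, rfl⟩
    rw [artin_schreier_finite F _ q hq]
    exact ⟨Ideal.Quotient.mk _ a, by rw [map_sub, map_pow]⟩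
  · intro hz
    obtain ⟨y, hy⟩ := (artin_schreier_finite F _ q hq z).mp hz
    obtain ⟨a, rfl⟩ := Ideal.Quotient.mk_surjective y
    set h' : E[X] := h * C (h.leadingCoeff)⁻¹ with hh'
    have hmono : h'.Monic := monic_mul_leadingCoeff_inv hirr.ne_zero
    set b : E[X] := a %ₘ h' with hb
    have hmk : Ideal.Quotient.mk (Ideal.span {h}) b = Ideal.Quotient.mk (Ideal.span {h}) a := by
      rw [Ideal.Quotient.eq]
      have hba : b - a = -(h' * (a /ₘ h')) := by
        have h1 := modByMonic_add_div a h'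
        linear_combination h1
      rw [hba]
      exact neg_mem (Ideal.mem_span_singleton.mpr
        (dvd_mul_of_dvd_left ⟨C (h.leadingCoeff)⁻¹, rfl⟩ _))
    have hdegb : b ∈ Polynomial.degreeLT E t := by
      rw [Polynomial.mem_degreeLT]
      calc b.degree < h'.degree := degree_modByMonic_lt a hmono
        _ = h.degree := degree_mul_leadingCoeff_inv h hirr.ne_zero
        _ = (r : WithBot ℕ) := by rw [degree_eq_natDegree hirr.ne_zero, hr]
        _ ≤ (t : WithBot ℕ) := Nat.cast_le.mpr hrt
    exact ⟨b ^ q - b, ⟨b, hdegb, rfl⟩, by rw [map_sub, map_pow, hmk, ← hy]⟩
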